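/- Let H be a separable Banach space, S a nonempty finite set, and X = H × S. Let (P_{s,t})_{s ≤ t} be a two-parameter family of Markov kernels on X satisfying the Chapman–Kolmogorov relation and the Feller property. Assume that for every t ∈ ℝ there exists a Borel probability measure μ_t on X such that for every x ∈ X and every bounded continuous φ : X → ℝ, ∫_X φ dP_{s,t}(x) → ∫_X φ dμ_t as s → −∞. Then (μ_t)_{t ∈ ℝ} is an evolution system of measures for the family: for all s ≤ t and every bounded continuous φ : X → ℝ, ∫_X P_{s,t}φ dμ_s = ∫_X φ dμ_t. -/
import Mathlib


open MeasureTheory ProbabilityTheory Filter Topology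

/-- Chapman–Kolmogorov in Bochner-integral form. -/
lemma ck_integral {X : Type*} [MeasurableSpace X] [TopologicalSpace X] [OpensMeasurableSpace X] [SecondCountableTopology X]
    (κ η χ : Kernel X X) [IsMarkovKernel κ] [IsMarkovKernel η] [IsMarkovKernel χ]
    (hCK : ∀ x : X, ∀ A : Set X, MeasurableSet A → χ x A = ∫⁻ y, η y A ∂(κ x))
    (φ : BoundedContinuousFunction X ℝ) (x : X) :
    ∫ z, φ z ∂(χ x) = ∫ y, ∫ z, φ z ∂(η y) ∂(κ x) := by
  have hsnd : ((κ x) ⊗ₘ η).snd = χ x := by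
    ext A hA
    rw [Measure.snd_apply hA, Measure.compProd_apply (measurable_snd hA), hCK x A hA]
    rfl
  have hmap : ∫ z, φ z ∂(χ x) = ∫ p : X × X, φ p.2 ∂((κ x) ⊗ₘ η) := by
    rw [← hsnd, Measure.snd, integral_map measurable_snd.aemeasurable
      φ.continuous.measurable.aestronglyMeasurable]
  rw [hmap]
  have hint : Integrable (fun p : X × X => φ p.2) ((κ x) ⊗ₘ η) :=
    (φ.compContinuous ⟨Prod.snd, continuous_snd⟩).integrable _
  exact Measure.integral_compProd hint

/-- if P_{s,t}(x) converges weakly as s → −∞ to a measure μ_t not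
depending on x, then (μ_t) is an evolution system of measures:
∫ P_{s,t}φ dμ_s = ∫ φ dμ_t for all s ≤ t and bounded continuous φ. -/
theorem stmt_1
    {H S : Type*}
    [NormedAddCommGroup H] [NormedSpace ℝ H] [CompleteSpace H]
    [SecondCountableTopology H] [MeasurableSpace H] [BorelSpace H]
    [Fintype S] [Nonempty S] [DecidableEq S]
    [TopologicalSpace S] [DiscreteTopology S]
    [MeasurableSpace S] [MeasurableSingletonClass S]
    (P : ℝ → ℝ → Kernel (H × S) (H × S))
    (hMarkov : ∀ s t : ℝ, s ≤ t → IsMarkovKernel (P s t))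
    (hCK : ∀ s r t : ℝ, s ≤ r → r ≤ t → ∀ x : H × S, ∀ A : Set (H × S),
      MeasurableSet A → P s t x A = ∫⁻ y, P r t y A ∂(P s r x))
    (hFeller : ∀ s t : ℝ, s ≤ t → ∀ φ : BoundedContinuousFunction (H × S) ℝ,
      Continuous (fun x : H × S => ∫ y, φ y ∂(P s t x)))
    (μ : ℝ → Measure (H × S)) (hμ : ∀ t, IsProbabilityMeasure (μ t))
    (hconv : ∀ t : ℝ, ∀ x : H × S, ∀ φ : BoundedContinuousFunction (H × S) ℝ,
      Tendsto (fun s : ℝ => ∫ y, φ y ∂(P s t x)) atBot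
        (nhds (∫ y, φ y ∂(μ t)))) :
    ∀ s t : ℝ, s ≤ t → ∀ φ : BoundedContinuousFunction (H × S) ℝ,
      ∫ x, (∫ y, φ y ∂(P s t x)) ∂(μ s) = ∫ x, φ x ∂(μ t) := by
  intro s t hst φ
  -- ψ = P_{s,t} φ as a bounded continuous function
  haveI := hMarkov s t hst
  set ψ : BoundedContinuousFunction (H × S) ℝ :=
    BoundedContinuousFunction.ofNormedAddCommGroup
      (fun x => ∫ y, φ y ∂(P s t x)) (hFeller s t hst φ) ‖φ‖ (by
        intro x
        calc ‖∫ y, φ y ∂(P s t x)‖ ≤ ∫ y, ‖φ y‖ ∂(P s t x) := norm_integral_le_integral_norm _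
          _ ≤ ∫ _y, ‖φ‖ ∂(P s t x) := by
              apply integral_mono_of_nonneg
              · exact Filter.Eventually.of_forall fun y => norm_nonneg _
              · exact integrable_const _
              · exact Filter.Eventually.of_forall fun y => φ.norm_coe_le_norm y
          _ = ‖φ‖ := by simp
        ) with hψ
  obtain ⟨x0⟩ : Nonempty (H × S) := ⟨⟨0, Classical.arbitrary S⟩⟩
  -- For r ≤ s : ∫ ψ d(P r s x0) = ∫ φ d(P r t x0)
  have key : ∀ r : ℝ, r ≤ s → ∫ y, ψ y ∂(P r s x0) = ∫ z, φ z ∂(P r t x0) := by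
    intro r hrs
    haveI := hMarkov r s hrs
    haveI := hMarkov r t (hrs.trans hst)
    rw [ck_integral (P r s) (P s t) (P r t) (fun x A hA => hCK r s t hrs hst x A hA) φ x0]
    rfl
  have h1 : Tendsto (fun r : ℝ => ∫ y, ψ y ∂(P r s x0)) atBot (nhds (∫ y, ψ y ∂(μ s))) :=
    hconv s x0 ψ
  have h2 : Tendsto (fun r : ℝ => ∫ y, ψ y ∂(P r s x0)) atBot (nhds (∫ z, φ z ∂(μ t))) := by
    refine (hconv t x0 φ).congr' ?_
    filter_upwards [eventually_le_atBot s] with r hrs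
    exact (key r hrs).symm
  have := tendsto_nhds_unique h1 h2
  simpa [hψ, BoundedContinuousFunction.ofNormedAddCommGroup] using this
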